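/- Let A be a complete normed unital algebra (Banach algebra) with submultiplicative norm and ‖1‖ = 1, let x ∈ A, and let (R_t)_{t ≥ 0} be a family of elements of A with R_0 = 0 for which there exist constants C ≥ 0 and ε > 0 such that ‖R_t‖ ≤ t²·C for all 0 ≤ t ≤ ε. Define k_t := 1 + t·x + R_t for t ≥ 0. Then for all 0 ≤ S < T the net α ↦ k_{t₂−t₁}·k_{t₃−t₂}·⋯·k_{t_{n+1}−t_n}, indexed by the partitions α = {S = t₁ < t₂ < … < t_{n+1} = T} of [S,T] partially ordered by inclusion, converges in norm to exp((T − S)·x), the exponential of (T − S)·x in A. -/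

import Mathlib

open Nat

section AuxExp

open NormedSpace in
lemma my_norm_exp_le {A : Type*} [NormedRing A] [NormOneClass A] [NormedAlgebra ℝ A]
    [CompleteSpace A] (y : A) : ‖exp y‖ ≤ Real.exp ‖y‖ := by
  rw [exp_eq_tsum (𝕂 := ℝ)]
  have h1 : Summable fun n : ℕ => ‖((n ! : ℝ))⁻¹ • y ^ n‖ := norm_expSeries_summable' y
  have h2 : Summable fun n : ℕ => ‖y‖ ^ n / n ! := Real.summable_pow_div_factorial ‖y‖
  calc ‖∑' n : ℕ, ((n ! : ℝ))⁻¹ • y ^ n‖ ≤ ∑' n : ℕ, ‖((n ! : ℝ))⁻¹ • y ^ n‖ :=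
        norm_tsum_le_tsum_norm h1
    _ ≤ ∑' n : ℕ, ‖y‖ ^ n / n ! := by
        refine Summable.tsum_le_tsum (fun n => ?_) h1 h2
        rw [norm_smul, norm_inv, Real.norm_natCast, div_eq_inv_mul]
        exact mul_le_mul_of_nonneg_left (norm_pow_le y n) (by positivity)
    _ = Real.exp ‖y‖ := by
        rw [Real.exp_eq_exp_ℝ, exp_eq_tsum_div]

open NormedSpace in
lemma my_norm_exp_sub_le {A : Type*} [NormedRing A] [NormOneClass A] [NormedAlgebra ℝ A]
    [CompleteSpace A] (y : A) : ‖exp y - 1 - y‖ ≤ ‖y‖ ^ 2 * Real.exp ‖y‖ := by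
  have hs : Summable fun n : ℕ => ((n ! : ℝ))⁻¹ • y ^ n := expSeries_summable' y
  have key : exp y - 1 - y = ∑' n : ℕ, (((n + 2)! : ℝ))⁻¹ • y ^ (n + 2) := by
    rw [exp_eq_tsum (𝕂 := ℝ)]
    have := Summable.sum_add_tsum_nat_add 2 hs
    simp [Finset.sum_range_succ] at this
    show (∑' n : ℕ, ((n ! : ℝ))⁻¹ • y ^ n) - 1 - y = _
    rw [← this]
    abel
  rw [key]
  have hn : Summable fun n : ℕ => ‖(((n + 2)! : ℝ))⁻¹ • y ^ (n + 2)‖ :=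
    (summable_nat_add_iff 2).mpr (norm_expSeries_summable' y)
  have h2 : Summable fun n : ℕ => ‖y‖ ^ 2 * (‖y‖ ^ n / n !) :=
    (Real.summable_pow_div_factorial ‖y‖).mul_left _
  calc ‖∑' n : ℕ, (((n + 2)! : ℝ))⁻¹ • y ^ (n + 2)‖
      ≤ ∑' n : ℕ, ‖(((n + 2)! : ℝ))⁻¹ • y ^ (n + 2)‖ := norm_tsum_le_tsum_norm hn
    _ ≤ ∑' n : ℕ, ‖y‖ ^ 2 * (‖y‖ ^ n / n !) := by
        refine Summable.tsum_le_tsum (fun n => ?_) hn h2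
        rw [norm_smul, norm_inv, Real.norm_natCast]
        calc ((n + 2)! : ℝ)⁻¹ * ‖y ^ (n + 2)‖ ≤ (n ! : ℝ)⁻¹ * ‖y‖ ^ (n + 2) := by
              apply mul_le_mul
              · apply inv_anti₀ (by positivity)
                exact_mod_cast Nat.factorial_le (by omega)
              · exact norm_pow_le y (n + 2)
              · positivity
              · positivity
          _ = ‖y‖ ^ 2 * (‖y‖ ^ n / n !) := by ring
    _ = ‖y‖ ^ 2 * Real.exp ‖y‖ := by
        rw [tsum_mul_left, Real.exp_eq_exp_ℝ, exp_eq_tsum_div]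

end AuxExp

section AuxList

local notation "cpl" l => List.zip l (List.tail l)

lemma cp_cons (a b : ℝ) (l : List ℝ) :
    (cpl (a :: b :: l)) = (a, b) :: (cpl (b :: l)) := rfl

lemma cp_sum_sub : ∀ (l : List ℝ) (a : ℝ),
    (((cpl (a :: l)).map fun p => p.2 - p.1).sum) = l.getLastD a - a
  | [], a => by simp
  | b :: l, a => by
    rw [cp_cons, List.map_cons, List.sum_cons, cp_sum_sub l b, List.getLastD_cons]
    ring

lemma cp_mem : ∀ (l : List ℝ) (a : ℝ) (p : ℝ × ℝ), p ∈ (cpl (a :: l)) →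
    p.1 ∈ a :: l ∧ p.2 ∈ l
  | [], a, p => by simp
  | b :: l, a, p => by
    rw [cp_cons]
    intro hp
    rcases List.mem_cons.1 hp with h | h
    · subst h; simp
    · obtain ⟨h1, h2⟩ := cp_mem l b p h
      exact ⟨List.mem_cons_of_mem _ h1, List.mem_cons_of_mem _ h2⟩

lemma cp_sorted : ∀ (l : List ℝ), l.Pairwise (· ≤ ·) → ∀ p ∈ (cpl l),
    p.1 ≤ p.2 ∧ ∀ u ∈ l, ¬(p.1 < u ∧ u < p.2)
  | [], _, p => by simp
  | [a], _, p => by simp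
  | a :: b :: l, hs, p => by
    rw [cp_cons]
    intro hp
    have hab : a ≤ b := (List.pairwise_cons.1 hs).1 b (by simp)
    have hs' : (b :: l).Pairwise (· ≤ ·) := (List.pairwise_cons.1 hs).2
    rcases List.mem_cons.1 hp with h | h
    · subst h
      refine ⟨hab, fun u hu ⟨h1, h2⟩ => ?_⟩
      rcases List.mem_cons.1 hu with rfl | hu
      · exact lt_irrefl _ h1
      · have : b ≤ u := by
          rcases List.mem_cons.1 hu with rfl | hu
          · exact le_refl _
          · exact (List.pairwise_cons.1 hs').1 u hu
        exact absurd h2 (not_lt.2 this)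
    · obtain ⟨h1, h2⟩ := cp_sorted (b :: l) hs' p h
      refine ⟨h1, fun u hu hc => ?_⟩
      rcases List.mem_cons.1 hu with rfl | hu
      · have hpb : b ≤ p.1 := by
          rcases List.mem_cons.1 (cp_mem l b p h).1 with rfl | hm
          · exact le_refl _
          · exact (List.pairwise_cons.1 hs').1 _ hm
        exact absurd hc.1 (not_lt.2 (hab.trans hpb))
      · exact h2 u hu hc

lemma sorted_le_getLastD : ∀ (l : List ℝ) (a : ℝ), (a :: l).Pairwise (· ≤ ·) →
    ∀ u ∈ a :: l, u ≤ l.getLastD a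
  | [], a, _, u, hu => by simp_all
  | b :: l, a, hs, u, hu => by
    have hs' := (List.pairwise_cons.1 hs).2
    rw [List.getLastD_cons]
    rcases List.mem_cons.1 hu with rfl | hu
    · exact ((List.pairwise_cons.1 hs).1 _ (by simp)).trans
        (sorted_le_getLastD l b hs' b (by simp))
    · exact sorted_le_getLastD l b hs' u hu

open NormedSpace in
lemma cp_prod_exp {A : Type*} [NormedRing A] [NormedAlgebra ℝ A] [CompleteSpace A] (x : A) :
    ∀ (l : List ℝ) (a : ℝ),
    (((cpl (a :: l)).map fun p => exp ((p.2 - p.1) • x)).prod)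
      = exp ((l.getLastD a - a) • x)
  | [], a => by simp
  | b :: l, a => by
    let +nondep : NormedAlgebra ℚ A := .restrictScalars ℚ ℝ A
    rw [cp_cons, List.map_cons, List.prod_cons, cp_prod_exp x l b, List.getLastD_cons]
    rw [← NormedSpace.exp_add_of_commute (Commute.smul_left (Commute.smul_right rfl _) _)]
    congr 1
    module

lemma prod_norm_le {A : Type*} [NormedRing A] [NormOneClass A] (c : ℝ) :
    ∀ (L : List (ℝ × ℝ)) (f : ℝ × ℝ → A) (d : ℝ × ℝ → ℝ),
    (∀ p ∈ L, ‖f p‖ ≤ Real.exp (c * d p)) →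
    ‖(L.map f).prod‖ ≤ Real.exp (c * (L.map d).sum)
  | [], f, d, _ => by simp
  | p :: L, f, d, hf => by
    simp only [List.map_cons, List.prod_cons, List.sum_cons, mul_add, Real.exp_add]
    calc ‖f p * (L.map f).prod‖ ≤ ‖f p‖ * ‖(L.map f).prod‖ := norm_mul_le _ _
      _ ≤ Real.exp (c * d p) * Real.exp (c * (L.map d).sum) := by
          apply mul_le_mul (hf p (by simp))
            (prod_norm_le c L f d fun q hq => hf q (List.mem_cons_of_mem _ hq))
            (norm_nonneg _) (Real.exp_nonneg _)

lemma prod_diff_bound {A : Type*} [NormedRing A] [NormOneClass A] (c : ℝ) :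
    ∀ (L : List (ℝ × ℝ)) (f g : ℝ × ℝ → A) (d : ℝ × ℝ → ℝ),
    (∀ p ∈ L, 0 ≤ c * d p) →
    (∀ p ∈ L, ‖f p‖ ≤ Real.exp (c * d p)) →
    (∀ p ∈ L, ‖g p‖ ≤ Real.exp (c * d p)) →
    ‖(L.map f).prod - (L.map g).prod‖ ≤
      Real.exp (c * (L.map d).sum) * ((L.map fun p => ‖f p - g p‖).sum)
  | [], f, g, d, _, _, _ => by simp
  | p :: L, f, g, d, hd, hf, hg => by
    simp only [List.map_cons, List.prod_cons, List.sum_cons]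
    have hdL : ∀ q ∈ L, 0 ≤ c * d q := fun q hq => hd q (List.mem_cons_of_mem _ hq)
    have hfL : ∀ q ∈ L, ‖f q‖ ≤ Real.exp (c * d q) := fun q hq => hf q (List.mem_cons_of_mem _ hq)
    have hgL : ∀ q ∈ L, ‖g q‖ ≤ Real.exp (c * d q) := fun q hq => hg q (List.mem_cons_of_mem _ hq)
    have IH := prod_diff_bound c L f g d hdL hfL hgL
    have hgprod : ‖(L.map g).prod‖ ≤ Real.exp (c * (L.map d).sum) := prod_norm_le c L g d hgL
    have split : f p * (L.map f).prod - g p * (L.map g).prod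
        = f p * ((L.map f).prod - (L.map g).prod) + (f p - g p) * (L.map g).prod := by
      rw [mul_sub, sub_mul]; abel
    rw [split]
    have h1 : ‖f p * ((L.map f).prod - (L.map g).prod)‖
        ≤ Real.exp (c * d p) * (Real.exp (c * (L.map d).sum) * (L.map fun q => ‖f q - g q‖).sum) :=
      (norm_mul_le _ _).trans (mul_le_mul (hf p (by simp)) IH (norm_nonneg _) (Real.exp_nonneg _))
    have h2 : ‖(f p - g p) * (L.map g).prod‖
        ≤ ‖f p - g p‖ * Real.exp (c * (L.map d).sum) :=
      (norm_mul_le _ _).trans (mul_le_mul_of_nonneg_left hgprod (norm_nonneg _))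
    calc ‖_ + _‖ ≤ _ := norm_add_le _ _
      _ ≤ Real.exp (c * d p) * (Real.exp (c * (L.map d).sum) * (L.map fun q => ‖f q - g q‖).sum)
          + ‖f p - g p‖ * Real.exp (c * (L.map d).sum) := add_le_add h1 h2
      _ ≤ Real.exp (c * (d p + (L.map d).sum)) * (‖f p - g p‖ + (L.map fun q => ‖f q - g q‖).sum) := by
          rw [mul_add c, Real.exp_add]
          have e1 : (1 : ℝ) ≤ Real.exp (c * d p) := Real.one_le_exp (hd p (by simp))
          have e2 : (0 : ℝ) < Real.exp (c * (L.map d).sum) := Real.exp_pos _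
          have e3 : (0 : ℝ) ≤ ‖f p - g p‖ := norm_nonneg _
          have e4 : (0 : ℝ) ≤ (L.map fun q => ‖f q - g q‖).sum :=
            List.sum_nonneg (by simp only [List.mem_map]; rintro u ⟨q, hq, rfl⟩; exact norm_nonneg _)
          nlinarith [mul_nonneg (mul_nonneg (sub_nonneg.2 e1) e3) e2.le]

lemma my_sum_le_sum : ∀ (L : List (ℝ × ℝ)) (f g : ℝ × ℝ → ℝ),
    (∀ p ∈ L, f p ≤ g p) → (L.map f).sum ≤ (L.map g).sum
  | [], f, g, _ => le_refl _
  | p :: L, f, g, h => by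
    simp only [List.map_cons, List.sum_cons]
    exact add_le_add (h p (by simp))
      (my_sum_le_sum L f g fun q hq => h q (List.mem_cons_of_mem _ hq))

end AuxList



/-- A partition of the interval `[R, S]`: a finite set of reals containing `R` and `S`
all of whose elements lie in `[R, S]`. -/
def IsPartition (R S : ℝ) (α : Finset ℝ) : Prop :=
  R ∈ α ∧ S ∈ α ∧ ∀ t ∈ α, R ≤ t ∧ t ≤ S

/-- The list of consecutive pairs `(t₁,t₂), (t₂,t₃), …` of the elements of a finite set
of reals, sorted increasingly. -/
noncomputable def consecPairs (α : Finset ℝ) : List (ℝ × ℝ) :=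
  (α.sort (· ≤ ·)).zip (α.sort (· ≤ ·)).tail

/-- The ordered product `g t₁ t₂ * g t₂ t₃ * ⋯ * g tₙ tₙ₊₁` over the consecutive points
`t₁ < t₂ < … < tₙ₊₁` of a partition, taken in increasing order. -/
noncomputable def partitionProd {A : Type*} [Ring A] (g : ℝ → ℝ → A) (α : Finset ℝ) : A :=
  ((consecPairs α).map fun p => g p.1 p.2).prod

/-- The sum `U t₁ t₂ + U t₂ t₃ + ⋯ + U tₙ tₙ₊₁` over the consecutive points of a
partition. -/
noncomputable def partitionSum {A : Type*} [Ring A] (U : ℝ → ℝ → A) (α : Finset ℝ) : A :=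
  ((consecPairs α).map fun p => U p.1 p.2).sum

/-- The mesh `max_i (t_{i+1} - t_i)` of a partition. -/
noncomputable def mesh (α : Finset ℝ) : ℝ :=
  ((consecPairs α).map fun p => p.2 - p.1).foldr max 0

/-- `IsNetLimit g r s u` means that the net `α ↦ partitionProd g α`, indexed by the
partitions of `[r, s]` partially ordered by inclusion, converges to `u`. -/
def IsNetLimit {A : Type*} [NormedRing A] (g : ℝ → ℝ → A) (r s : ℝ) (u : A) : Prop :=
  ∀ ε > 0, ∃ γ : Finset ℝ, IsPartition r s γ ∧
    ∀ α : Finset ℝ, IsPartition r s α → γ ⊆ α → ‖partitionProd g α - u‖ < ε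

set_option maxHeartbeats 2000000 in
/-- the net of ordered products `k_{t₂-t₁} ⋯ k_{t_{n+1}-t_n}` over the
partitions of `[S, T]`, where `k_t = 1 + t • x + R_t` with `‖R_t‖ ≤ t²·C` for small
`t ≥ 0`, converges in norm to `exp((T - S) • x)` in the Banach algebra `A`. -/
theorem stmt_14 {A : Type*} [NormedRing A] [NormOneClass A] [NormedAlgebra ℝ A]
    [CompleteSpace A]
    (x : A) (Rt : ℝ → A) (hR0 : Rt 0 = 0)
    (C ε : ℝ) (hC : 0 ≤ C) (hε : 0 < ε)
    (hRt : ∀ t : ℝ, 0 ≤ t → t ≤ ε → ‖Rt t‖ ≤ t ^ 2 * C) :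
    ∀ S T : ℝ, 0 ≤ S → S < T →
      ∀ δ > 0, ∃ γ : Finset ℝ, IsPartition S T γ ∧
        ∀ α : Finset ℝ, IsPartition S T α → γ ⊆ α →
          ‖partitionProd (fun r s => 1 + (s - r) • x + Rt (s - r)) α -
              NormedSpace.exp ((T - S) • x)‖ < δ := by
  intro S T hS hST δ hδ
  set c : ℝ := ‖x‖ + C with hcdef
  have hc0 : 0 ≤ c := by positivity
  set K : ℝ := C + ‖x‖ ^ 2 * Real.exp 1 with hKdef
  have hK0 : 0 ≤ K := by positivity
  set M : ℝ := Real.exp (c * (T - S)) with hMdef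
  have hM0 : 0 < M := Real.exp_pos _
  have hTS : 0 < T - S := sub_pos.2 hST
  obtain ⟨n1, hn1⟩ := exists_nat_gt ((T - S) / ε)
  obtain ⟨n2, hn2⟩ := exists_nat_gt ((T - S) * (‖x‖ + 1))
  obtain ⟨n3, hn3⟩ := exists_nat_gt (M * (K + 1) * (T - S) * (T - S) / δ)
  set n : ℕ := n1 + n2 + n3 + 1 with hndef
  have hnpos : 0 < (n : ℝ) := by positivity
  have hcast1 : (n1 : ℝ) ≤ n := Nat.cast_le.mpr (by omega)
  have hcast2 : (n2 : ℝ) ≤ n := Nat.cast_le.mpr (by omega)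
  have hcast3 : (n3 : ℝ) ≤ n := Nat.cast_le.mpr (by omega)
  set h : ℝ := (T - S) / n with hhdef
  have hhpos : 0 < h := div_pos hTS hnpos
  have hnh : (n : ℝ) * h = T - S := by rw [hhdef]; field_simp
  -- the three smallness properties of h
  have h1 : h ≤ ε := by
    rw [hhdef, div_le_iff₀ hnpos]
    have := (div_lt_iff₀ hε).1 (lt_of_lt_of_le hn1 hcast1)
    nlinarith
  have h2 : h * (‖x‖ + 1) ≤ 1 := by
    rw [hhdef, div_mul_eq_mul_div, div_le_one hnpos]
    nlinarith
  have h3 : M * (K * h * (T - S)) < δ := by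
    have hn3' : M * (K + 1) * (T - S) * (T - S) < n * δ := by
      have := (div_lt_iff₀ hδ).1 (lt_of_lt_of_le hn3 hcast3)
      nlinarith
    rw [hhdef, show M * (K * ((T - S) / n) * (T - S)) = M * K * (T - S) * (T - S) / n by ring,
      div_lt_iff₀ hnpos]
    nlinarith
  have hexpand : h * (‖x‖ + 1) = h * ‖x‖ + h := by ring
  have hhx0 : 0 ≤ h * ‖x‖ := mul_nonneg hhpos.le (norm_nonneg x)
  have hle1 : h ≤ 1 := by linarith
  have hhx : h * ‖x‖ ≤ 1 := by linarith
  -- the uniform partition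
  set γ : Finset ℝ := (Finset.range (n + 1)).image (fun i : ℕ => S + i * h) with hγdef
  have hγmem : ∀ i : ℕ, i ≤ n → S + i * h ∈ γ := fun i hi =>
    Finset.mem_image.2 ⟨i, Finset.mem_range.2 (by omega), rfl⟩
  have hγpart : IsPartition S T γ := by
    refine ⟨by simpa using hγmem 0 (by omega), ?_, ?_⟩
    · have := hγmem n le_rfl
      rwa [hnh, show S + (T - S) = T by ring] at this
    · intro t ht
      obtain ⟨i, hi, rfl⟩ := Finset.mem_image.1 ht
      have hi' : (i : ℝ) ≤ n := by exact_mod_cast Nat.le_of_lt_succ (Finset.mem_range.1 hi)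
      constructor
      · have := mul_nonneg (Nat.cast_nonneg (α := ℝ) i) hhpos.le
        linarith
      · have := mul_le_mul_of_nonneg_right hi' hhpos.le
        linarith [hnh]
  refine ⟨γ, hγpart, ?_⟩
  intro α hα hγα
  obtain ⟨hSα, hTα, hbd⟩ := hα
  -- set up the sorted list
  have hlne : α.sort (· ≤ ·) ≠ [] := by
    intro hnil
    have : S ∈ α.sort (· ≤ ·) := (Finset.mem_sort _).2 hSα
    rw [hnil] at this; exact List.not_mem_nil this
  obtain ⟨a, l, hl⟩ := List.exists_cons_of_ne_nil hlne
  have hsorted : (a :: l).Pairwise (· ≤ ·) := hl ▸ α.pairwise_sort _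
  have hmem' : ∀ u : ℝ, u ∈ a :: l ↔ u ∈ α := fun u => by
    rw [← Finset.mem_sort (· ≤ ·), hl]
  have haS : a = S := by
    have h1' : S ≤ a := (hbd a ((hmem' a).1 (by simp))).1
    have h2' : a ≤ S := by
      rcases List.mem_cons.1 ((hmem' S).2 hSα) with rfl | hu
      · exact le_rfl
      · exact (List.pairwise_cons.1 hsorted).1 S hu
    exact le_antisymm h2' h1'
  have hlastmem : l.getLastD a ∈ a :: l := by
    cases l with
    | nil => simp
    | cons b t =>
      rw [List.getLastD_cons]
      refine List.mem_cons_of_mem _ ?_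
      have hm := List.getLast_mem (l := b :: t) (by simp)
      rwa [List.getLast_eq_getLastD] at hm
  have hlast : l.getLastD a = T := by
    have h1' : l.getLastD a ≤ T := (hbd _ ((hmem' _).1 hlastmem)).2
    have h2' : T ≤ l.getLastD a :=
      sorted_le_getLastD l a hsorted T ((hmem' T).2 hTα)
    exact le_antisymm h1' h2'
  set L : List (ℝ × ℝ) := (a :: l).zip ((a :: l).tail) with hLdef
  -- per-pair facts
  have hpair : ∀ p ∈ L, 0 ≤ p.2 - p.1 ∧ p.2 - p.1 ≤ h := by
    intro p hp
    obtain ⟨hple, hnb⟩ := cp_sorted (a :: l) hsorted p hp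
    refine ⟨sub_nonneg.2 hple, ?_⟩
    by_contra hcon
    push_neg at hcon
    obtain ⟨hp1m, hp2m⟩ := cp_mem l a p hp
    have hp1α : p.1 ∈ α := (hmem' _).1 hp1m
    have hp2α : p.2 ∈ α := (hmem' _).1 (List.mem_cons_of_mem _ hp2m)
    set q : ℝ := (p.1 - S) / h with hqdef
    have hq0 : 0 ≤ q := div_nonneg (sub_nonneg.2 (hbd _ hp1α).1) hhpos.le
    have hqh : q * h = p.1 - S := div_mul_cancel₀ _ hhpos.ne'
    set k : ℕ := ⌊q⌋₊ + 1 with hkdef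
    have hkq : q < (k : ℝ) := by
      rw [hkdef]; push_cast; exact Nat.lt_floor_add_one q
    have hkq' : (k : ℝ) ≤ q + 1 := by
      rw [hkdef]; push_cast
      have := Nat.floor_le hq0
      linarith
    set u : ℝ := S + k * h with hudef
    have hp1u : p.1 < u := by
      have : q * h < (k : ℝ) * h := mul_lt_mul_of_pos_right hkq hhpos
      rw [hqh] at this; rw [hudef]; linarith
    have hup2 : u < p.2 := by
      have : (k : ℝ) * h ≤ (q + 1) * h := mul_le_mul_of_nonneg_right hkq' hhpos.le
      rw [add_mul, one_mul, hqh] at this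
      rw [hudef]; linarith
    have hkn : k ≤ n := by
      have hub : (k : ℝ) * h < (n : ℝ) * h := by
        rw [hnh]
        have := (hbd _ hp2α).2
        linarith [hp1u, hup2]
      have : (k : ℝ) < n := lt_of_mul_lt_mul_right hub hhpos.le
      exact_mod_cast this.le
    have huγ : u ∈ γ := hγmem k hkn
    have huαl : u ∈ a :: l := (hmem' u).2 (hγα huγ)
    exact hnb u huαl ⟨hp1u, hup2⟩
  -- the functions
  set f : ℝ × ℝ → A := fun p => 1 + (p.2 - p.1) • x + Rt (p.2 - p.1) with hfdef
  set g : ℝ × ℝ → A := fun p => NormedSpace.exp ((p.2 - p.1) • x) with hgdef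
  set d : ℝ × ℝ → ℝ := fun p => p.2 - p.1 with hddef
  have hdfacts : ∀ p ∈ L, 0 ≤ d p ∧ d p ≤ h := hpair
  have hsmulnorm : ∀ p ∈ L, ‖(d p) • x‖ = d p * ‖x‖ := by
    intro p hp
    rw [norm_smul, Real.norm_eq_abs, abs_of_nonneg (hdfacts p hp).1]
  have hdxle : ∀ p ∈ L, d p * ‖x‖ ≤ 1 := by
    intro p hp
    obtain ⟨hd0, hdh⟩ := hdfacts p hp
    nlinarith [norm_nonneg x]
  have hRtb : ∀ p ∈ L, ‖Rt (d p)‖ ≤ (d p) ^ 2 * C := by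
    intro p hp
    obtain ⟨hd0, hdh⟩ := hdfacts p hp
    exact hRt (d p) hd0 (hdh.trans h1)
  have hcd : ∀ p ∈ L, 0 ≤ c * d p := fun p hp =>
    mul_nonneg hc0 (hdfacts p hp).1
  have hfb : ∀ p ∈ L, ‖f p‖ ≤ Real.exp (c * d p) := by
    intro p hp
    obtain ⟨hd0, hdh⟩ := hdfacts p hp
    have hd1 : d p ≤ 1 := hdh.trans hle1
    have hsq : (d p) ^ 2 * C ≤ d p * C := by nlinarith [mul_nonneg (mul_nonneg hd0 (sub_nonneg.2 hd1)) hC]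
    calc ‖f p‖ ≤ ‖1 + (d p) • x‖ + ‖Rt (d p)‖ := norm_add_le _ _
      _ ≤ ‖(1 : A)‖ + ‖(d p) • x‖ + ‖Rt (d p)‖ := by
          gcongr; exact norm_add_le _ _
      _ ≤ 1 + d p * ‖x‖ + (d p) ^ 2 * C := by
          rw [norm_one, hsmulnorm p hp]
          gcongr
          exact hRtb p hp
      _ ≤ 1 + d p * ‖x‖ + d p * C := by linarith
      _ = c * d p + 1 := by rw [hcdef]; ring
      _ ≤ Real.exp (c * d p) := Real.add_one_le_exp _
  have hgb : ∀ p ∈ L, ‖g p‖ ≤ Real.exp (c * d p) := by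
    intro p hp
    obtain ⟨hd0, hdh⟩ := hdfacts p hp
    calc ‖g p‖ ≤ Real.exp ‖(d p) • x‖ := my_norm_exp_le _
      _ ≤ Real.exp (c * d p) := by
          apply Real.exp_le_exp.2
          rw [hsmulnorm p hp, hcdef]
          nlinarith
  have hdiffb : ∀ p ∈ L, ‖f p - g p‖ ≤ K * h * d p := by
    intro p hp
    obtain ⟨hd0, hdh⟩ := hdfacts p hp
    have hfg : f p - g p = Rt (d p) - (NormedSpace.exp ((d p) • x) - 1 - (d p) • x) := by
      simp only [hfdef, hgdef, hddef]; abel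
    have hexpb : ‖NormedSpace.exp ((d p) • x) - 1 - (d p) • x‖
        ≤ (d p) ^ 2 * (‖x‖ ^ 2 * Real.exp 1) := by
      calc ‖NormedSpace.exp ((d p) • x) - 1 - (d p) • x‖
          ≤ ‖(d p) • x‖ ^ 2 * Real.exp ‖(d p) • x‖ := my_norm_exp_sub_le _
        _ ≤ (d p * ‖x‖) ^ 2 * Real.exp 1 := by
            rw [hsmulnorm p hp]
            gcongr
            · exact hdxle p hp
        _ = (d p) ^ 2 * (‖x‖ ^ 2 * Real.exp 1) := by ring
    calc ‖f p - g p‖ ≤ ‖Rt (d p)‖ + ‖NormedSpace.exp ((d p) • x) - 1 - (d p) • x‖ := by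
          rw [hfg]; exact norm_sub_le _ _
      _ ≤ (d p) ^ 2 * C + (d p) ^ 2 * (‖x‖ ^ 2 * Real.exp 1) := add_le_add (hRtb p hp) hexpb
      _ = (d p) ^ 2 * K := by rw [hKdef]; ring
      _ ≤ K * h * d p := by nlinarith [mul_nonneg (mul_nonneg hK0 hd0) (sub_nonneg.2 hdh)]
  -- assembly
  have hsumd : (L.map d).sum = T - S := by
    rw [hLdef, hddef, cp_sum_sub l a, hlast, haS]
  have hprodg : (L.map g).prod = NormedSpace.exp ((T - S) • x) := by
    rw [hLdef, hgdef, cp_prod_exp x l a, hlast, haS]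
  have hprodf : partitionProd (fun r s => 1 + (s - r) • x + Rt (s - r)) α = (L.map f).prod := by
    rw [partitionProd, consecPairs, hl]
  have main := prod_diff_bound c L f g d hcd hfb hgb
  rw [hsumd] at main
  have hsumb : (L.map fun p => ‖f p - g p‖).sum ≤ K * h * (T - S) := by
    calc (L.map fun p => ‖f p - g p‖).sum ≤ (L.map fun p => K * h * d p).sum :=
          my_sum_le_sum L _ _ hdiffb
      _ = K * h * (L.map d).sum := List.sum_map_mul_left L d (K * h)
      _ = K * h * (T - S) := by rw [hsumd]
  rw [hprodf, ← hprodg]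
  calc ‖(L.map f).prod - (L.map g).prod‖ ≤ M * ((L.map fun p => ‖f p - g p‖).sum) := main
    _ ≤ M * (K * h * (T - S)) := mul_le_mul_of_nonneg_left hsumb hM0.le
    _ < δ := by nlinarith
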